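/- Let P : E ⥤ B be an isofibration of categories, let P' : E' ⥤ B be a functor, and let f : E ⥤ E' be an equivalence of categories with f ⋙ P' = P. Then f extends to an equivalence over B: there exist a functor g : E' ⥤ E with g ⋙ P = P' and natural isomorphisms α : f ⋙ g ≅ 𝟭_E and β : g ⋙ f ≅ 𝟭_{E'} such that P maps every component of α to an identity morphism and P' maps every component of β to an identity morphism. -/
import Mathlib


open CategoryTheory

/-- A functor `P` is an isofibration if every isomorphism out of the image of an object
lifts to an isomorphism with prescribed domain. -/
def IsIsofibration {X Y : Type*} [Category X] [Category Y] (P : X ⥤ Y) : Prop :=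
  ∀ (x : X) (b : Y) (u : P.obj x ≅ b),
    ∃ (y : X) (v : x ≅ y) (h : P.obj y = b), P.mapIso v = u ≪≫ eqToIso h.symm

/-- An equivalence `f` over `B` out of an isofibration extends to an equivalence over
`B`. -/
theorem isofibration_equiv_extends_over
    {E E' B : Type*} [Category E] [Category E'] [Category B]
    (P : E ⥤ B) (P' : E' ⥤ B) (hP : IsIsofibration P)
    (f : E ⥤ E') (hf : f.IsEquivalence) (hfP : f ⋙ P' = P) :
    ∃ (g : E' ⥤ E) (_ : g ⋙ P = P') (α : f ⋙ g ≅ 𝟭 E) (β : g ⋙ f ≅ 𝟭 E'),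
      (∀ e : E, ∃ h : P.obj ((f ⋙ g).obj e) = P.obj e,
        P.map (α.hom.app e) = eqToHom h) ∧
      (∀ e' : E', ∃ h : P'.obj ((g ⋙ f).obj e') = P'.obj e',
        P'.map (β.hom.app e') = eqToHom h) := by
  haveI := hf
  let ε : f.inv ⋙ f ≅ 𝟭 E' := f.asEquivalence.counitIso
  have hobj : ∀ x : E, P.obj x = P'.obj (f.obj x) := fun x =>
    (Functor.congr_obj hfP x).symm
  have hmap : ∀ {x₁ x₂ : E} (m : x₁ ⟶ x₂),
      P'.map (f.map m) = eqToHom (hobj x₁).symm ≫ P.map m ≫ eqToHom (hobj x₂) := by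
    intro x₁ x₂ m
    have := Functor.congr_hom hfP m
    simpa using this
  choose y v h hv using fun e' : E' =>
    hP (f.inv.obj e') (P'.obj e')
      (eqToIso (hobj (f.inv.obj e')) ≪≫ P'.mapIso (ε.app e'))
  -- the comparison isomorphisms
  let w : ∀ e' : E', f.obj (y e') ≅ e' := fun e' =>
    f.mapIso (v e').symm ≪≫ ε.app e'
  have hv' : ∀ e', P.map (v e').hom =
      (eqToHom (hobj (f.inv.obj e')) ≫ P'.map ((ε.app e').hom)) ≫ eqToHom (h e').symm := by
    intro e'
    have := congrArg Iso.hom (hv e')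
    simpa using this
  have hw : ∀ e', P'.map (w e').hom = eqToHom ((hobj (y e')).symm.trans (h e')) := by
    intro e'
    have hvinv : P.map (v e').inv = eqToHom (h e') ≫
        (P'.map ((ε.app e').inv) ≫ eqToHom (hobj (f.inv.obj e')).symm) := by
      have := congrArg Iso.inv (hv e')
      simpa using this
    show P'.map ((f.map (v e').inv) ≫ (ε.app e').hom) = _
    rw [P'.map_comp, hmap, hvinv]
    simp [← P'.map_comp]
  have hw' : ∀ e', P'.map (w e').inv = eqToHom ((h e').symm.trans (hobj (y e'))) := by
    intro e'
    have : P'.mapIso (w e') = eqToIso ((hobj (y e')).symm.trans (h e')) :=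
      Iso.ext (hw e')
    have := congrArg Iso.inv this
    simpa using this
  let g : E' ⥤ E :=
    { obj := y
      map := fun {a b} φ => f.preimage ((w a).hom ≫ φ ≫ (w b).inv)
      map_id := fun a => f.map_injective (by simp)
      map_comp := fun φ ψ => f.map_injective (by simp) }
  have hgmap : ∀ {a b : E'} (φ : a ⟶ b),
      f.map (g.map φ) = (w a).hom ≫ φ ≫ (w b).inv := by
    intro a b φ
    simp [g]
  have hgP : g ⋙ P = P' := by
    refine CategoryTheory.Functor.ext (fun e' => h e') ?_
    intro a b φ
    show P.map (g.map φ) = _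
    have : P'.map (f.map (g.map φ)) = eqToHom (hobj (y a)).symm ≫
        P.map (g.map φ) ≫ eqToHom (hobj (y b)) := hmap _
    have h2 : P.map (g.map φ) = eqToHom (hobj (y a)) ≫
        P'.map (f.map (g.map φ)) ≫ eqToHom (hobj (y b)).symm := by
      rw [this]; simp
    rw [h2, hgmap, P'.map_comp, P'.map_comp, hw, hw']
    simp
  refine ⟨g, hgP,
    NatIso.ofComponents (fun e => f.preimageIso (w (f.obj e))) ?_,
    NatIso.ofComponents w ?_, ?_, ?_⟩
  · intro a b m
    apply f.map_injective
    simp [hgmap]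
  · intro a b φ
    simp [hgmap]
  · intro e
    refine ⟨(h (f.obj e)).trans (hobj e).symm, ?_⟩
    have : P.map ((f.preimageIso (w (f.obj e))).hom) =
        eqToHom (hobj (y (f.obj e))) ≫ P'.map (f.map (f.preimage (w (f.obj e)).hom)) ≫
          eqToHom (hobj e).symm := by
      rw [hmap]; simp
    show P.map ((f.preimageIso (w (f.obj e))).hom) = _
    rw [this]
    simp [hw]
  · intro e'
    exact ⟨(hobj (y e')).symm.trans (h e'), hw e'⟩
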